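/- The function ξ satisfies lim_{y → 0⁺} ξ(y)/y⁴ = k₂ θ²/12. -/

import Mathlib

open Real Filter Set

private lemma aux_deriv1 (x : ℝ) :
    HasDerivAt (fun x : ℝ => x * Real.sinh x - 2 * Real.cosh x + 2)
      (x * Real.cosh x - Real.sinh x) x := by
  have h := (((hasDerivAt_id x).mul (Real.hasDerivAt_sinh x)).sub
      ((hasDerivAt_const x (2:ℝ)).mul (Real.hasDerivAt_cosh x))).add_const 2
  exact h.congr_deriv (by simp only [id]; ring)

private lemma aux_deriv2 (x : ℝ) :
    HasDerivAt (fun x : ℝ => x * Real.cosh x - Real.sinh x) (x * Real.sinh x) x := by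
  have h := ((hasDerivAt_id x).mul (Real.hasDerivAt_cosh x)).sub (Real.hasDerivAt_sinh x)
  exact h.congr_deriv (by simp only [id]; ring)

private lemma aux_deriv3 (x : ℝ) :
    HasDerivAt (fun x : ℝ => x * Real.sinh x) (Real.sinh x + x * Real.cosh x) x := by
  have h := (hasDerivAt_id x).mul (Real.hasDerivAt_sinh x)
  exact h.congr_deriv (by simp only [id]; ring)

private lemma aux_deriv4 (x : ℝ) :
    HasDerivAt (fun x : ℝ => Real.sinh x + x * Real.cosh x)
      (2 * Real.cosh x + x * Real.sinh x) x := by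
  have h := (Real.hasDerivAt_sinh x).add ((hasDerivAt_id x).mul (Real.hasDerivAt_cosh x))
  exact h.congr_deriv (by simp only [id]; ring)

private lemma tendsto_zero_of_cont {f : ℝ → ℝ} (hf : Continuous f) (h0 : f 0 = 0) :
    Filter.Tendsto f (nhdsWithin 0 (Set.Ioi 0)) (nhds 0) := by
  simpa [h0] using (hf.continuousAt.continuousWithinAt :
    ContinuousWithinAt f (Set.Ioi 0) 0).tendsto

private lemma ev_pos : ∀ᶠ x in nhdsWithin (0:ℝ) (Set.Ioi 0), (0:ℝ) < x :=
  eventually_nhdsWithin_of_forall (fun x hx => hx)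

private lemma step3 :
    Filter.Tendsto (fun x => (Real.sinh x + x * Real.cosh x) / (24 * x))
      (nhdsWithin 0 (Set.Ioi 0)) (nhds (1/12 : ℝ)) := by
  apply HasDerivAt.lhopital_zero_nhdsGT
    (f' := fun x => 2 * Real.cosh x + x * Real.sinh x) (g' := fun _ => (24:ℝ))
  · exact Eventually.of_forall fun x => aux_deriv4 x
  · refine Eventually.of_forall fun x => ?_
    have h : HasDerivAt (fun x : ℝ => 24 * x) (24 * 1) x := (hasDerivAt_id x).const_mul 24
    simpa using h
  · exact Eventually.of_forall fun _ => by norm_num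
  · exact tendsto_zero_of_cont (by continuity) (by simp)
  · exact tendsto_zero_of_cont (by continuity) (by simp)
  · have hc : Filter.Tendsto (fun x => (2 * Real.cosh x + x * Real.sinh x) / 24)
        (nhdsWithin (0:ℝ) (Set.Ioi 0)) (nhds ((2 * Real.cosh 0 + 0 * Real.sinh 0) / 24)) := by
      apply ContinuousAt.continuousWithinAt
      fun_prop
    have he : ((2 * Real.cosh 0 + 0 * Real.sinh 0) / 24 : ℝ) = 1/12 := by
      simp; norm_num
    rw [he] at hc
    exact hc

private lemma step2 :
    Filter.Tendsto (fun x => (x * Real.sinh x) / (12 * x ^ 2))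
      (nhdsWithin 0 (Set.Ioi 0)) (nhds (1/12 : ℝ)) := by
  apply HasDerivAt.lhopital_zero_nhdsGT
    (f' := fun x => Real.sinh x + x * Real.cosh x) (g' := fun x => 24 * x)
  · exact Eventually.of_forall fun x => aux_deriv3 x
  · refine Eventually.of_forall fun x => ?_
    have h : HasDerivAt (fun x : ℝ => 12 * x ^ 2) (12 * ((2:ℕ) * x ^ 1)) x :=
      (hasDerivAt_pow 2 x).const_mul 12
    convert h using 1; push_cast; ring
  · filter_upwards [ev_pos] with x hx; positivity
  · exact tendsto_zero_of_cont (by continuity) (by simp)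
  · exact tendsto_zero_of_cont (by continuity) (by simp)
  · exact step3

private lemma step1 :
    Filter.Tendsto (fun x => (x * Real.cosh x - Real.sinh x) / (4 * x ^ 3))
      (nhdsWithin 0 (Set.Ioi 0)) (nhds (1/12 : ℝ)) := by
  apply HasDerivAt.lhopital_zero_nhdsGT
    (f' := fun x => x * Real.sinh x) (g' := fun x => 12 * x ^ 2)
  · exact Eventually.of_forall fun x => aux_deriv2 x
  · refine Eventually.of_forall fun x => ?_
    have h : HasDerivAt (fun x : ℝ => 4 * x ^ 3) (4 * ((3:ℕ) * x ^ 2)) x :=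
      (hasDerivAt_pow 3 x).const_mul 4
    convert h using 1; push_cast; ring
  · filter_upwards [ev_pos] with x hx; positivity
  · exact tendsto_zero_of_cont (by continuity) (by simp)
  · exact tendsto_zero_of_cont (by continuity) (by simp)
  · exact step2

private lemma step0 :
    Filter.Tendsto (fun x => (x * Real.sinh x - 2 * Real.cosh x + 2) / x ^ 4)
      (nhdsWithin 0 (Set.Ioi 0)) (nhds (1/12 : ℝ)) := by
  apply HasDerivAt.lhopital_zero_nhdsGT
    (f' := fun x => x * Real.cosh x - Real.sinh x) (g' := fun x => 4 * x ^ 3)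
  · exact Eventually.of_forall fun x => aux_deriv1 x
  · refine Eventually.of_forall fun x => ?_
    have h : HasDerivAt (fun x : ℝ => x ^ 4) ((4:ℕ) * x ^ 3) x := hasDerivAt_pow 4 x
    simpa using h
  · filter_upwards [ev_pos] with x hx; positivity
  · exact tendsto_zero_of_cont (by continuity) (by simp)
  · exact tendsto_zero_of_cont (by continuity) (by simp)
  · exact step1

private lemma sinh_div_self :
    Filter.Tendsto (fun x => Real.sinh x / x) (nhdsWithin 0 (Set.Ioi 0)) (nhds (1:ℝ)) := by
  have h : HasDerivAt Real.sinh 1 0 := by simpa using Real.hasDerivAt_sinh 0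
  have := hasDerivAt_iff_tendsto_slope.mp h
  have h2 := this.mono_left (nhdsWithin_mono 0 (fun x hx => ne_of_gt hx))
  refine h2.congr' ?_
  filter_upwards [ev_pos] with x hx
  rw [slope_def_field]; simp


/-- `ξ(y) = k₂ y² − (2k₂/θ) ((e^{θy}+e^{−θy}−2)/(e^{θy}−e^{−θy})) y`. -/
noncomputable def xiFun (θ k₂ y : ℝ) : ℝ :=
  k₂ * y ^ 2 -
    (2 * k₂ / θ) *
      ((Real.exp (θ * y) + Real.exp (-(θ * y)) - 2) /
        (Real.exp (θ * y) - Real.exp (-(θ * y)))) * y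

theorem stmt_9 (θ k₂ : ℝ) (hθ : 0 < θ) (hk : 0 < k₂) :
    Filter.Tendsto (fun y => xiFun θ k₂ y / y ^ 4) (nhdsWithin 0 (Set.Ioi 0))
      (nhds (k₂ * θ ^ 2 / 12)) := by
  have hθ' : θ ≠ 0 := ne_of_gt hθ
  have L : Filter.Tendsto (fun y : ℝ => θ * y) (nhdsWithin 0 (Set.Ioi 0))
      (nhdsWithin 0 (Set.Ioi 0)) := by
    rw [tendsto_nhdsWithin_iff]
    constructor
    · have h := (tendsto_id.const_mul θ :
        Filter.Tendsto (fun y : ℝ => θ * id y) (nhds 0) (nhds (θ * 0)))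
      simp only [mul_zero, id] at h
      exact h.mono_left nhdsWithin_le_nhds
    · filter_upwards [ev_pos] with y hy
      exact Set.mem_Ioi.mpr (mul_pos hθ hy)
  have hA := step0.comp L
  have hB := (sinh_div_self.comp L).inv₀ one_ne_zero
  have hM := (hA.mul hB).const_mul (k₂ * θ ^ 2)
  have he : k₂ * θ ^ 2 * (1 / 12 * (1:ℝ)⁻¹) = k₂ * θ ^ 2 / 12 := by rw [inv_one]; ring
  rw [he] at hM
  refine hM.congr' ?_
  filter_upwards [ev_pos] with y hy
  have hx : (0:ℝ) < θ * y := mul_pos hθ hy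
  have hs : Real.sinh (θ * y) ≠ 0 := (Real.sinh_pos_iff.mpr hx).ne'
  have hy' : y ≠ 0 := ne_of_gt hy
  show k₂ * θ ^ 2 *
      ((θ * y * Real.sinh (θ * y) - 2 * Real.cosh (θ * y) + 2) / (θ * y) ^ 4 *
        (Real.sinh (θ * y) / (θ * y))⁻¹) = xiFun θ k₂ y / y ^ 4
  rw [xiFun,
    show Real.exp (θ * y) + Real.exp (-(θ * y)) - 2 = 2 * Real.cosh (θ * y) - 2 by
      rw [Real.cosh_eq]; ring,
    show Real.exp (θ * y) - Real.exp (-(θ * y)) = 2 * Real.sinh (θ * y) by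
      rw [Real.sinh_eq]; ring]
  field_simp
  ring
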